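/- Let λ ∈ ℤπ be self-conjugate (conj(λ) = λ) with the property that for every g ∈ π of order exactly 2 the coefficient of g in λ is even, and suppose λ lies in the two-sided ideal I generated by {h − 1 : h ∈ G} for a normal subgroup G of π. Then λ is a ℤ-linear combination of elements of the form g₁(h−1)g₂ + g₂⁻¹(h⁻¹−1)g₁⁻¹ with g₁, g₂ ∈ π and h ∈ G. -/

import Mathlib

/-- The involution on ℤπ induced by g ↦ g⁻¹, extended ℤ-linearly. -/
noncomputable def GRconj {π : Type} [Group π] (x : MonoidAlgebra ℤ π) : MonoidAlgebra ℤ π :=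
  MonoidAlgebra.ofCoeff (Finsupp.mapDomain (fun g : π => g⁻¹) x.coeff)

namespace SelfConjNormLikeAux

variable {π : Type} [Group π]

def NSet (G : Subgroup π) : Set (MonoidAlgebra ℤ π) :=
  {x : MonoidAlgebra ℤ π | ∃ (g₁ g₂ : π) (h : π), h ∈ G ∧
    x = MonoidAlgebra.of ℤ π g₁ * (MonoidAlgebra.of ℤ π h - 1) * MonoidAlgebra.of ℤ π g₂
      + MonoidAlgebra.of ℤ π g₂⁻¹ * (MonoidAlgebra.of ℤ π h⁻¹ - 1) * MonoidAlgebra.of ℤ π g₁⁻¹}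

lemma norm_gen_mem (G : Subgroup π) {a b : π} (h : b⁻¹ * a ∈ G) :
    (MonoidAlgebra.single a 1 - MonoidAlgebra.single b 1
      + (MonoidAlgebra.single a⁻¹ 1 - MonoidAlgebra.single b⁻¹ 1) : MonoidAlgebra ℤ π) ∈ NSet G := by
  refine ⟨b, 1, b⁻¹ * a, h, ?_⟩
  simp only [MonoidAlgebra.of_apply, MonoidAlgebra.one_def, sub_mul, mul_sub, one_mul, mul_one,
    MonoidAlgebra.single_mul_single, mul_inv_rev, inv_inv, inv_one, one_mul, mul_one]
  rw [mul_inv_cancel_left]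
  group

lemma sub_apply' (u v : MonoidAlgebra ℤ π) (x : π) : (u - v).coeff x = u.coeff x - v.coeff x :=
  Finsupp.sub_apply u.coeff v.coeff x

lemma add_apply' (u v : MonoidAlgebra ℤ π) (x : π) : (u + v).coeff x = u.coeff x + v.coeff x :=
  Finsupp.add_apply u.coeff v.coeff x

lemma neg_apply' (u : MonoidAlgebra ℤ π) (x : π) : (-u).coeff x = -(u.coeff x) :=
  Finsupp.neg_apply u.coeff x

lemma step (G : Subgroup π) [G.Normal] {n : ℕ}
    (IH : ∀ m, m < n → ∀ l : MonoidAlgebra ℤ π,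
      (l.coeff.support.sum fun x => (l.coeff x).natAbs) = m →
      (∀ g : π, l.coeff g⁻¹ = l.coeff g) →
      (∀ g : π, g ^ 2 = 1 → g ≠ 1 → Even (l.coeff g)) →
      Finsupp.mapDomain (QuotientGroup.mk : π → π ⧸ G) l.coeff = 0 →
      l ∈ AddSubgroup.closure (NSet G))
    (lam : MonoidAlgebra ℤ π)
    (hn : (lam.coeff.support.sum fun x => (lam.coeff x).natAbs) = n)
    (hsym : ∀ g : π, lam.coeff g⁻¹ = lam.coeff g)
    (heven : ∀ g : π, g ^ 2 = 1 → g ≠ 1 → Even (lam.coeff g))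
    (hmap : Finsupp.mapDomain (QuotientGroup.mk : π → π ⧸ G) lam.coeff = 0)
    (a b : π) (hq : (b : π ⧸ G) = (a : π ⧸ G))
    (hpa : 0 < lam.coeff a) (hnb : lam.coeff b < 0) :
    lam ∈ AddSubgroup.closure (NSet G) := by
  classical
  have hlaminv_a : lam.coeff a⁻¹ = lam.coeff a := hsym a
  have hlaminv_b : lam.coeff b⁻¹ = lam.coeff b := hsym b
  have hba : b ≠ a := fun h => by rw [h] at hnb; omega
  have hbainv : b ≠ a⁻¹ := fun h => by rw [h, hlaminv_a] at hnb; omega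
  have hab : a ≠ b := Ne.symm hba
  have habinv : a ≠ b⁻¹ := fun h => by rw [h, hlaminv_b] at hpa; omega
  have hainvbinv : a⁻¹ ≠ b⁻¹ := fun h => hab (inv_injective h)
  have hbinvainv : b⁻¹ ≠ a⁻¹ := fun h => hba (inv_injective h)
  have hainvb : a⁻¹ ≠ b := fun h => habinv (by rw [← h, inv_inv])
  have hbinva : b⁻¹ ≠ a := fun h => hbainv (by rw [← h, inv_inv])
  set g0 : MonoidAlgebra ℤ π :=
    MonoidAlgebra.single a 1 - MonoidAlgebra.single b 1 + (MonoidAlgebra.single a⁻¹ 1 - MonoidAlgebra.single b⁻¹ 1)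
    with hg0
  have hg0x : ∀ x : π, g0.coeff x =
      (if a = x then 1 else 0) - (if b = x then 1 else 0)
        + ((if a⁻¹ = x then 1 else 0) - (if b⁻¹ = x then 1 else 0)) := by
    intro x
    rw [hg0, add_apply', sub_apply', sub_apply', MonoidAlgebra.coeff_single, MonoidAlgebra.coeff_single,
      MonoidAlgebra.coeff_single, MonoidAlgebra.coeff_single, Finsupp.single_apply, Finsupp.single_apply, Finsupp.single_apply, Finsupp.single_apply]
  set lam' : MonoidAlgebra ℤ π := lam - g0 with hlam'
  have hlx : ∀ x : π, lam'.coeff x = lam.coeff x - g0.coeff x := fun x => sub_apply' lam g0 x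
  -- termwise bound
  have hle : ∀ x : π, (lam'.coeff x).natAbs ≤ (lam.coeff x).natAbs := by
    intro x
    rw [hlx x, hg0x x]
    by_cases hxa : a = x
    · subst hxa
      rw [if_pos rfl, if_neg hba, if_neg hbinva]
      by_cases h2 : a⁻¹ = a
      · rw [if_pos h2]; omega
      · rw [if_neg h2]; omega
    · by_cases hxai : a⁻¹ = x
      · subst hxai
        rw [if_neg hxa, if_pos rfl, if_neg hbainv, if_neg hbinvainv, hlaminv_a]
        omega
      · by_cases hxb : b = x
        · subst hxb
          rw [if_neg hab, if_pos rfl, if_neg hainvb]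
          by_cases h2 : b⁻¹ = b
          · rw [if_pos h2]; omega
          · rw [if_neg h2]; omega
        · by_cases hxbi : b⁻¹ = x
          · subst hxbi
            rw [if_neg habinv, if_neg hxb, if_neg hainvbinv, if_pos rfl, hlaminv_b]
            omega
          · rw [if_neg hxa, if_neg hxb, if_neg hxai, if_neg hxbi]
            omega
  -- strict decrease at some point of the support
  have hstrict : ∃ x ∈ lam.coeff.support, (lam'.coeff x).natAbs < (lam.coeff x).natAbs := by
    by_cases h1 : a = 1
    · refine ⟨b, Finsupp.mem_support_iff.mpr (by omega), ?_⟩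
      rw [hlx b, hg0x b, if_neg hab, if_pos rfl, if_neg hainvb]
      by_cases h2 : b⁻¹ = b
      · have hb2 : b ^ 2 = 1 := by rw [pow_two, mul_eq_one_iff_inv_eq]; exact h2
        have hbne1 : b ≠ 1 := fun h => hba (h.trans h1.symm)
        obtain ⟨m, hm⟩ := heven b hb2 hbne1
        rw [if_pos h2]
        omega
      · rw [if_neg h2]; omega
    · refine ⟨a, Finsupp.mem_support_iff.mpr (by omega), ?_⟩
      rw [hlx a, hg0x a, if_pos rfl, if_neg hba, if_neg hbinva]
      by_cases h2 : a⁻¹ = a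
      · have ha2 : a ^ 2 = 1 := by rw [pow_two, mul_eq_one_iff_inv_eq]; exact h2
        obtain ⟨m, hm⟩ := heven a ha2 h1
        rw [if_pos h2]
        omega
      · rw [if_neg h2]; omega
  -- measure decreases
  have hmn : (lam'.coeff.support.sum fun x => (lam'.coeff x).natAbs) < n := by
    rw [← hn]
    have hzero : ∀ (l : MonoidAlgebra ℤ π), ∀ x ∈ lam.coeff.support ∪ lam'.coeff.support,
        x ∉ l.coeff.support → (l.coeff x).natAbs = 0 := by
      intro l.coeff x _ hx
      rw [Finsupp.notMem_support_iff.mp hx]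
      rfl
    rw [Finset.sum_subset (Finset.subset_union_right (s₁ := lam.coeff.support) (s₂ := lam'.coeff.support))
        (fun x hx hnx => hzero lam' x hx hnx),
      Finset.sum_subset (Finset.subset_union_left (s₁ := lam.coeff.support) (s₂ := lam'.coeff.support))
        (fun x hx hnx => hzero lam x hx hnx)]
    apply Finset.sum_lt_sum (fun i _ => hle i)
    obtain ⟨x, hx, hlt⟩ := hstrict
    exact ⟨x, Finset.mem_union_left _ hx, hlt⟩
  -- the new element satisfies the hypotheses
  have hsym' : ∀ g : π, lam'.coeff g⁻¹ = lam'.coeff g := by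
    intro g
    rw [hlx, hlx, hsym g, hg0x, hg0x]
    have key : ∀ c : π, (if c = g⁻¹ then (1:ℤ) else 0) = (if c⁻¹ = g then 1 else 0) := by
      intro c
      by_cases h : c = g⁻¹
      · rw [if_pos h, if_pos (by rw [h, inv_inv])]
      · rw [if_neg h, if_neg (fun h' => h (by rw [← h', inv_inv]))]
    rw [key a, key b, key a⁻¹, key b⁻¹, inv_inv, inv_inv]
    ring
  have heven' : ∀ g : π, g ^ 2 = 1 → g ≠ 1 → Even (lam'.coeff g) := by
    intro g hg hg1
    have hginv : g⁻¹ = g := inv_eq_of_mul_eq_one_right (by rw [← pow_two]; exact hg)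
    obtain ⟨m, hm⟩ := heven g hg hg1
    rw [hlx, hg0x]
    have key : ∀ c : π, (if c = g then (1:ℤ) else 0) = (if c⁻¹ = g then 1 else 0) := by
      intro c
      by_cases h : c = g
      · rw [if_pos h, if_pos (by rw [h, hginv])]
      · rw [if_neg h, if_neg (fun h' => h (by rw [← inv_inv c, h', hginv]))]
    rw [key a, key b]
    set X := (if a⁻¹ = g then (1:ℤ) else 0) with hX
    set Y := (if b⁻¹ = g then (1:ℤ) else 0) with hY
    exact ⟨m - (X - Y), by omega⟩
  have hmap' : Finsupp.mapDomain (QuotientGroup.mk : π → π ⧸ G) lam'.coeff = 0 := by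
    have msub : ∀ u v : MonoidAlgebra ℤ π,
        Finsupp.mapDomain (QuotientGroup.mk : π → π ⧸ G) (u - v).coeff
          = Finsupp.mapDomain (QuotientGroup.mk : π → π ⧸ G) u.coeff
            - Finsupp.mapDomain (QuotientGroup.mk : π → π ⧸ G) v.coeff := fun u v =>
      map_sub (Finsupp.mapDomain.addMonoidHom (QuotientGroup.mk : π → π ⧸ G)) u.coeff v.coeff
    have madd : ∀ u v : MonoidAlgebra ℤ π,
        Finsupp.mapDomain (QuotientGroup.mk : π → π ⧸ G) (u + v).coeff
          = Finsupp.mapDomain (QuotientGroup.mk : π → π ⧸ G) u.coeff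
            + Finsupp.mapDomain (QuotientGroup.mk : π → π ⧸ G) v.coeff := fun u v =>
      map_add (Finsupp.mapDomain.addMonoidHom (QuotientGroup.mk : π → π ⧸ G)) u.coeff v.coeff
    have hq' : ((b⁻¹ : π) : π ⧸ G) = ((a⁻¹ : π) : π ⧸ G) := by
      have := congrArg (·⁻¹) hq
      simpa using this
    rw [hlam', msub, hmap, hg0, madd, msub, msub, MonoidAlgebra.coeff_single, MonoidAlgebra.coeff_single,
      MonoidAlgebra.coeff_single, MonoidAlgebra.coeff_single, Finsupp.mapDomain_single,
      Finsupp.mapDomain_single, Finsupp.mapDomain_single, Finsupp.mapDomain_single, hq, hq']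
    simp
  -- conclude
  have hmem' : lam' ∈ AddSubgroup.closure (NSet G) :=
    IH _ hmn lam' rfl hsym' heven' hmap'
  have hg0mem : g0 ∈ AddSubgroup.closure (NSet G) :=
    AddSubgroup.subset_closure (norm_gen_mem G (QuotientGroup.eq.mp hq))
  have : lam = lam' + g0 := by rw [hlam', sub_add_cancel]
  rw [this]
  exact AddSubgroup.add_mem _ hmem' hg0mem

lemma key (G : Subgroup π) [G.Normal] : ∀ (n : ℕ) (lam : MonoidAlgebra ℤ π),
    (lam.coeff.support.sum fun x => (lam.coeff x).natAbs) = n →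
    (∀ g : π, lam.coeff g⁻¹ = lam.coeff g) →
    (∀ g : π, g ^ 2 = 1 → g ≠ 1 → Even (lam.coeff g)) →
    Finsupp.mapDomain (QuotientGroup.mk : π → π ⧸ G) lam.coeff = 0 →
    lam ∈ AddSubgroup.closure (NSet G) := by
  intro n
  induction n using Nat.strong_induction_on with
  | _ n IH =>
  intro lam hn hsym heven hmap
  classical
  by_cases h0 : lam = 0
  · rw [h0]; exact zero_mem _
  obtain ⟨a, ha⟩ := Finsupp.support_nonempty_iff.mpr (mt MonoidAlgebra.coeff_eq_zero.mp h0)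
  have hla : lam.coeff a ≠ 0 := Finsupp.mem_support_iff.mp ha
  have hcs : (lam.coeff.support.sum fun x =>
      if ((x : π ⧸ G)) = ((a : π ⧸ G)) then lam.coeff x else 0) = 0 := by
    have h := DFunLike.congr_fun hmap ((a : π) : π ⧸ G)
    rw [Finsupp.mapDomain, Finsupp.sum_apply] at h
    simpa [Finsupp.sum, Finsupp.single_apply] using h
  have hbex : ∃ b : π, ((b : π ⧸ G)) = ((a : π ⧸ G)) ∧ lam.coeff a * lam.coeff b < 0 := by
    by_contra hc
    push_neg at hc
    have hpos : 0 < lam.coeff.support.sum fun x =>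
        lam.coeff a * (if ((x : π ⧸ G)) = ((a : π ⧸ G)) then lam.coeff x else 0) := by
      apply Finset.sum_pos'
      · intro i _
        by_cases h : ((i : π ⧸ G)) = ((a : π ⧸ G))
        · rw [if_pos h]; exact hc i h
        · rw [if_neg h, mul_zero]
      · exact ⟨a, ha, by rw [if_pos rfl]; exact mul_self_pos.mpr hla⟩
    rw [← Finset.mul_sum, hcs, mul_zero] at hpos
    exact lt_irrefl 0 hpos
  obtain ⟨b, hqb, hsb⟩ := hbex
  rcases hla.lt_or_gt with hneg | hpos
  · -- lam.coeff a < 0 : apply step to -lam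
    have h1 : ((-lam).coeff.support.sum fun x => ((-lam).coeff x).natAbs) = n := by
      rw [← hn, MonoidAlgebra.coeff_neg, Finsupp.support_neg]
      exact Finset.sum_congr rfl fun x _ => by rw [Finsupp.neg_apply]; omega
    have h2 : ∀ g : π, (-lam).coeff g⁻¹ = (-lam).coeff g := fun g => by
      rw [neg_apply', neg_apply', hsym g]
    have h3 : ∀ g : π, g ^ 2 = 1 → g ≠ 1 → Even ((-lam).coeff g) := fun g hg hg1 => by
      rw [neg_apply']; exact (heven g hg hg1).neg
    have h4 : Finsupp.mapDomain (QuotientGroup.mk : π → π ⧸ G) (-lam).coeff = 0 := by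
      have hneg' : Finsupp.mapDomain (QuotientGroup.mk : π → π ⧸ G) (-lam).coeff
          = -(Finsupp.mapDomain (QuotientGroup.mk : π → π ⧸ G) lam.coeff) :=
        map_neg (Finsupp.mapDomain.addMonoidHom (QuotientGroup.mk : π → π ⧸ G)) lam.coeff
      rw [hneg', hmap, neg_zero]
    have h5 : 0 < (-lam).coeff a := by rw [neg_apply']; omega
    have h6 : (-lam).coeff b < 0 := by
      rw [neg_apply']
      rcases mul_neg_iff.mp hsb with ⟨_, h⟩ | ⟨h, _⟩ <;> omega
    have hres := step G IH (-lam) h1 h2 h3 h4 a b hqb h5 h6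
    rw [← neg_neg lam]
    exact AddSubgroup.neg_mem _ hres
  · have h6 : lam.coeff b < 0 := by
      rcases mul_neg_iff.mp hsb with ⟨_, h⟩ | ⟨h, _⟩ <;> omega
    exact step G IH lam hn hsym heven hmap a b hqb hpos h6

end SelfConjNormLikeAux

/-- A self-conjugate, almost even element of the two-sided ideal generated by
{h − 1 : h ∈ G} is a ℤ-linear combination of norm-like elements
g₁(h−1)g₂ + g₂⁻¹(h⁻¹−1)g₁⁻¹. -/
theorem selfConjugate_ideal_element_is_sum_of_norm_like
    (π : Type) [Group π] (G : Subgroup π) [G.Normal]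
    (lam : MonoidAlgebra ℤ π)
    (hself : GRconj lam = lam)
    (heven : ∀ g : π, g ^ 2 = 1 → g ≠ 1 → Even (lam.coeff g))
    (hmem : lam ∈ AddSubgroup.closure
      {x : MonoidAlgebra ℤ π | ∃ (g₁ g₂ : π) (h : π), h ∈ G ∧
        x = MonoidAlgebra.of ℤ π g₁ * (MonoidAlgebra.of ℤ π h - 1) * MonoidAlgebra.of ℤ π g₂}) :
    lam ∈ AddSubgroup.closure
      {x : MonoidAlgebra ℤ π | ∃ (g₁ g₂ : π) (h : π), h ∈ G ∧
        x = MonoidAlgebra.of ℤ π g₁ * (MonoidAlgebra.of ℤ π h - 1) * MonoidAlgebra.of ℤ π g₂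
          + MonoidAlgebra.of ℤ π g₂⁻¹ * (MonoidAlgebra.of ℤ π h⁻¹ - 1) * MonoidAlgebra.of ℤ π g₁⁻¹} := by
  have hsym : ∀ g : π, lam.coeff g⁻¹ = lam.coeff g := by
    intro g
    have h1 : (GRconj lam).coeff ((g⁻¹)⁻¹) = lam.coeff g⁻¹ :=
      Finsupp.mapDomain_apply (inv_injective : Function.Injective (fun g : π => g⁻¹)) lam.coeff g⁻¹
    rw [inv_inv, hself] at h1
    exact h1.symm
  have hmap : Finsupp.mapDomain (QuotientGroup.mk : π → π ⧸ G) lam.coeff = 0 := by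
    refine AddSubgroup.closure_induction
      (p := fun x _ => Finsupp.mapDomain (QuotientGroup.mk : π → π ⧸ G) x.coeff = 0)
      ?_ (Finsupp.mapDomain_zero) ?_ ?_ hmem
    · rintro x ⟨g₁, g₂, h, hh, rfl⟩
      have : (MonoidAlgebra.mapDomainRingHom ℤ (QuotientGroup.mk' G))
          (MonoidAlgebra.of ℤ π g₁ * (MonoidAlgebra.of ℤ π h - 1) * MonoidAlgebra.of ℤ π g₂)
          = 0 := by
        rw [map_mul, map_mul, map_sub, map_one]
        have hh1 : (MonoidAlgebra.mapDomainRingHom ℤ (QuotientGroup.mk' G))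
            (MonoidAlgebra.of ℤ π h) = 1 := by
          show MonoidAlgebra.mapDomain _ _ = _
          rw [MonoidAlgebra.of_apply, MonoidAlgebra.mapDomain_single]
          have : ((QuotientGroup.mk' G) h : π ⧸ G) = 1 := (QuotientGroup.eq_one_iff h).mpr hh
          rw [this, MonoidAlgebra.one_def]
        rw [hh1, sub_self, mul_zero, zero_mul]
      exact congrArg MonoidAlgebra.coeff this
    · intro x y _ _ hx hy
      have hadd : Finsupp.mapDomain (QuotientGroup.mk : π → π ⧸ G) (x + y).coeff
          = Finsupp.mapDomain (QuotientGroup.mk : π → π ⧸ G) x.coeff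
            + Finsupp.mapDomain (QuotientGroup.mk : π → π ⧸ G) y.coeff :=
        map_add (Finsupp.mapDomain.addMonoidHom (QuotientGroup.mk : π → π ⧸ G)) x.coeff y.coeff
      rw [hadd, hx, hy, add_zero]
    · intro x _ hx
      have hneg : Finsupp.mapDomain (QuotientGroup.mk : π → π ⧸ G) (-x).coeff
          = -(Finsupp.mapDomain (QuotientGroup.mk : π → π ⧸ G) x.coeff) :=
        map_neg (Finsupp.mapDomain.addMonoidHom (QuotientGroup.mk : π → π ⧸ G)) x.coeff
      rw [hneg, hx, neg_zero]
  exact SelfConjNormLikeAux.key G _ lam rfl hsym heven hmap
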